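/- For every ε > 0 and every r ∈ ℝ, |k'_ε(r) − (−2η(r))| ≤ ε; in particular k'_ε converges to −2η uniformly on ℝ as ε → 0. -/

import Mathlib

/-- The C²-regularization `k_ε` of the squared negative part. -/
noncomputable def kEps (ε : ℝ) : ℝ → ℝ := fun r =>
  if r < -ε then r ^ 2 - ε ^ 2 / 6
  else if r < 0 then -(r ^ 3 / ε) * (r / (2 * ε) + 4 / 3)
  else 0

/-- `η(r) = r⁻`, the negative part of `r`. -/
noncomputable def etaFun : ℝ → ℝ := fun r => max (-r) 0

noncomputable def gD (ε : ℝ) (r : ℝ) : ℝ :=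
  if r < -ε then 2 * r else if r < 0 then -2 * r ^ 3 / ε ^ 2 - 4 * r ^ 2 / ε else 0

lemma q_hasDerivAt (ε : ℝ) (hε : 0 < ε) (r : ℝ) :
    HasDerivAt (fun x : ℝ => -(x ^ 3 / ε) * (x / (2 * ε) + 4 / 3))
      (-2 * r ^ 3 / ε ^ 2 - 4 * r ^ 2 / ε) r := by
  have h : HasDerivAt (fun x : ℝ => -(x ^ 3 / ε) * (x / (2 * ε) + 4 / 3))
      ((-(3 * r ^ 2 / ε)) * (r / (2 * ε) + 4 / 3) + (-(r ^ 3 / ε)) * (1 / (2 * ε))) r := by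
    have h1 : HasDerivAt (fun x : ℝ => -(x ^ 3 / ε)) (-(3 * r ^ 2 / ε)) r := by
      have := ((hasDerivAt_pow 3 r).div_const ε).neg
      exact this.congr_deriv (by norm_num)
    have h2 : HasDerivAt (fun x : ℝ => x / (2 * ε) + 4 / 3) (1 / (2 * ε)) r := by
      simpa using ((hasDerivAt_id r).div_const (2 * ε)).add_const (4 / 3 : ℝ)
    exact h1.mul h2
  convert h using 1
  field_simp
  ring

lemma kEps_hasDerivAt (ε : ℝ) (hε : 0 < ε) (r : ℝ) :
    HasDerivAt (kEps ε) (gD ε r) r := by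
  rcases lt_trichotomy r (-ε) with h1 | h1 | h1
  · -- r < -ε
    have hp : HasDerivAt (fun x : ℝ => x ^ 2 - ε ^ 2 / 6) (2 * r) r := by
      simpa using (hasDerivAt_pow 2 r).sub_const (ε ^ 2 / 6)
    have heq : kEps ε =ᶠ[nhds r] fun x : ℝ => x ^ 2 - ε ^ 2 / 6 := by
      filter_upwards [Iio_mem_nhds h1] with x hx
      simp [kEps, hx.out]
    rw [gD, if_pos h1]
    exact hp.congr_of_eventuallyEq heq
  · -- r = -ε
    subst h1
    have hval : gD ε (-ε) = -2 * ε := by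
      rw [gD, if_neg (lt_irrefl _), if_pos (by linarith)]
      field_simp
      ring
    rw [hval]
    have hleft : HasDerivWithinAt (kEps ε) (-2 * ε) (Set.Iic (-ε)) (-ε) := by
      have hp : HasDerivAt (fun x : ℝ => x ^ 2 - ε ^ 2 / 6) (-2 * ε) (-ε) := by
        have := (hasDerivAt_pow 2 (-ε)).sub_const (ε ^ 2 / 6)
        exact this.congr_deriv (by norm_num)
      refine hp.hasDerivWithinAt.congr (fun x hx => ?_) ?_
      · rcases lt_or_eq_of_le (Set.mem_Iic.1 hx) with h | h
        · simp [kEps, h]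
        · subst h
          rw [kEps]
          simp only [lt_irrefl, if_false]
          rw [if_pos (by linarith : -ε < (0:ℝ))]
          field_simp
          ring
      · rw [kEps]
        simp only [lt_irrefl, if_false]
        rw [if_pos (by linarith : -ε < (0:ℝ))]
        field_simp
        ring
    have hright : HasDerivWithinAt (kEps ε) (-2 * ε) (Set.Icc (-ε) 0) (-ε) := by
      have hq := q_hasDerivAt ε hε (-ε)
      have hq' : HasDerivAt (fun x : ℝ => -(x ^ 3 / ε) * (x / (2 * ε) + 4 / 3)) (-2 * ε) (-ε) := by
        convert hq using 1
        field_simp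
        ring
      refine hq'.hasDerivWithinAt.congr (fun x hx => ?_) ?_
      · rcases lt_or_eq_of_le hx.2 with h | h
        · rw [kEps]
          rw [if_neg (by linarith [hx.1] : ¬ x < -ε), if_pos h]
        · subst h
          simp [kEps, hε, not_lt.2 hε.le]
      · rw [kEps]
        simp only [lt_irrefl, if_false]
        rw [if_pos (by linarith : -ε < (0:ℝ))]
    have hu := hleft.union hright
    refine hu.hasDerivAt ?_
    refine Filter.mem_of_superset (Iic_mem_nhds (by linarith : -ε < (0:ℝ))) ?_
    intro x hx
    rcases le_or_gt x (-ε) with h | h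
    · exact Or.inl h
    · exact Or.inr ⟨h.le, hx⟩
  · rcases lt_trichotomy r 0 with h2 | h2 | h2
    · -- -ε < r < 0
      have hq := q_hasDerivAt ε hε r
      have heq : kEps ε =ᶠ[nhds r] fun x : ℝ => -(x ^ 3 / ε) * (x / (2 * ε) + 4 / 3) := by
        filter_upwards [Ioo_mem_nhds h1 h2] with x hx
        rw [kEps]
        rw [if_neg (by linarith [hx.1] : ¬ x < -ε), if_pos hx.2]
      rw [gD, if_neg (by linarith : ¬ r < -ε), if_pos h2]
      exact hq.congr_of_eventuallyEq heq
    · -- r = 0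
      subst h2
      have hval : gD ε 0 = 0 := by rw [gD]; simp [not_lt.2 hε.le]
      rw [hval]
      have hleft : HasDerivWithinAt (kEps ε) 0 (Set.Icc (-ε) 0) 0 := by
        have hq := q_hasDerivAt ε hε 0
        have hq' : HasDerivAt (fun x : ℝ => -(x ^ 3 / ε) * (x / (2 * ε) + 4 / 3)) 0 0 := by
          convert hq using 1; simp
        refine hq'.hasDerivWithinAt.congr (fun x hx => ?_) ?_
        · rcases lt_or_eq_of_le hx.2 with h | h
          · rw [kEps, if_neg (by linarith [hx.1] : ¬ x < -ε), if_pos h]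
          · subst h
            simp [kEps, not_lt.2 hε.le, lt_irrefl]
        · simp [kEps, not_lt.2 hε.le, lt_irrefl]
      have hright : HasDerivWithinAt (kEps ε) 0 (Set.Ici 0) 0 := by
        refine (hasDerivAt_const (0:ℝ) (0:ℝ)).hasDerivWithinAt.congr (fun x hx => ?_) ?_
        · rw [kEps, if_neg (by linarith [hx.out] : ¬ x < -ε), if_neg (not_lt.2 hx.out)]
        · simp [kEps, not_lt.2 hε.le, lt_irrefl]
      have hu := hleft.union hright
      refine hu.hasDerivAt ?_
      refine Filter.mem_of_superset (Ici_mem_nhds (by linarith : -ε < (0:ℝ))) ?_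
      intro x hx
      rcases le_or_gt x 0 with h | h
      · exact Or.inl ⟨hx, h⟩
      · exact Or.inr h.le
    · -- r > 0
      have heq : kEps ε =ᶠ[nhds r] fun _ : ℝ => (0:ℝ) := by
        filter_upwards [Ioi_mem_nhds h2] with x hx
        rw [kEps, if_neg (by linarith [hx.out] : ¬ x < -ε), if_neg (not_lt.2 (le_of_lt hx.out))]
      rw [gD, if_neg (by linarith : ¬ r < -ε), if_neg (not_lt.2 h2.le)]
      exact (hasDerivAt_const r (0:ℝ)).congr_of_eventuallyEq heq

lemma gD_bound (ε : ℝ) (hε : 0 < ε) (r : ℝ) : |gD ε r - (-2 * etaFun r)| ≤ ε := by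
  rw [gD, etaFun]
  rcases lt_trichotomy r (-ε) with h1 | h1 | h1
  · rw [if_pos h1, max_eq_left (by linarith : (0:ℝ) ≤ -r)]
    rw [show 2 * r - -2 * -r = 0 by ring]
    simpa using hε.le
  · subst h1
    rw [if_neg (lt_irrefl _), if_pos (by linarith : -ε < (0:ℝ)),
      max_eq_left (by linarith : (0:ℝ) ≤ -(-ε))]
    have : -2 * (-ε) ^ 3 / ε ^ 2 - 4 * (-ε) ^ 2 / ε - -2 * - -ε = 0 := by
      field_simp; ring
    rw [this]
    simpa using hε.le
  · rcases lt_trichotomy r 0 with h2 | h2 | h2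
    · rw [if_neg (by linarith : ¬ r < -ε), if_pos h2,
        max_eq_left (by linarith : (0:ℝ) ≤ -r)]
      have hε2 : (0:ℝ) < ε ^ 2 := by positivity
      have key : -2 * r ^ 3 / ε ^ 2 - 4 * r ^ 2 / ε - -2 * - r
          = (-2 * r ^ 3 - 4 * r ^ 2 * ε - 2 * r * ε ^ 2) / ε ^ 2 := by
        field_simp
      rw [key, abs_le]
      constructor
      · rw [le_div_iff₀ hε2]
        nlinarith [sq_nonneg (r + ε), sq_nonneg r, sq_nonneg (3 * r + ε), mul_nonneg (neg_nonneg.2 h2.le) (sq_nonneg (r + ε))]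
      · rw [div_le_iff₀ hε2]
        nlinarith [sq_nonneg (3 * r + ε), mul_nonneg (by linarith : (0:ℝ) ≤ ε + r) (sq_nonneg (3 * r + ε)), mul_nonneg (neg_nonneg.2 h2.le) (sq_nonneg (3 * r + ε))]
    · subst h2
      simp [not_lt.2 hε.le, hε.le]
    · rw [if_neg (by linarith : ¬ r < -ε), if_neg (not_lt.2 h2.le),
        max_eq_right (by linarith : -r ≤ 0)]
      simpa using hε.le

theorem kEps_deriv_tendstoUniformly :
    (∀ ε : ℝ, 0 < ε → ∀ r : ℝ, |deriv (kEps ε) r - (-2 * etaFun r)| ≤ ε) ∧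
    TendstoUniformly (fun ε : ℝ => deriv (kEps ε)) (fun r => -2 * etaFun r)
      (nhdsWithin 0 (Set.Ioi 0)) := by
  have hmain : ∀ ε : ℝ, 0 < ε → ∀ r : ℝ, |deriv (kEps ε) r - (-2 * etaFun r)| ≤ ε := by
    intro ε hε r
    rw [(kEps_hasDerivAt ε hε r).deriv]
    exact gD_bound ε hε r
  refine ⟨hmain, ?_⟩
  rw [Metric.tendstoUniformly_iff]
  intro δ hδ
  filter_upwards [Ioo_mem_nhdsGT_of_mem (Set.mem_Ico.2 ⟨le_refl 0, hδ⟩)] with ε hε r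
  rw [Real.dist_eq, abs_sub_comm]
  exact lt_of_le_of_lt (hmain ε hε.1 r) hε.2
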